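/- Let G be a countable discrete group and H, L subgroups. If L belongs to the closure of the conjugacy class of H in the Chabauty topology, then λ_{G/L} is weakly contained in λ_{G/H}. -/

import Mathlib

open scoped Classical ENNReal
open Topology Filter

noncomputable section

namespace QR

/-- The evaluation of a unitary representation on an element of the group algebra `ℂ[G]`. -/
def repAlg {G : Type*} [Group G] {E : Type*} [NormedAddCommGroup E] [NormedSpace ℂ E]
    (π : G →* (E →L[ℂ] E)) (f : MonoidAlgebra ℂ G) : E →L[ℂ] E :=
  MonoidAlgebra.lift ℂ (E →L[ℂ] E) G π f

/-- Weak containment `ρ ≺ π` of representations: `‖ρ(f)‖ ≤ ‖π(f)‖` for every element `f` of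
the group algebra `ℂ[G]`. -/
def WeaklyContained {G : Type*} [Group G] {E F : Type*}
    [NormedAddCommGroup E] [NormedSpace ℂ E] [NormedAddCommGroup F] [NormedSpace ℂ F]
    (ρ : G →* (E →L[ℂ] E)) (π : G →* (F →L[ℂ] F)) : Prop :=
  ∀ f : MonoidAlgebra ℂ G, ‖repAlg ρ f‖ ≤ ‖repAlg π f‖

/-- The trivial (one-dimensional) representation `1_G`. -/
def trivialRep (G : Type*) [Group G] : G →* (ℂ →L[ℂ] ℂ) := 1

section lp

variable {X K : Type*} [NormedAddCommGroup K] [InnerProductSpace ℂ K]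

lemma memTwist (e : X ≃ X) (U : X → (K ≃ₗᵢ[ℂ] K)) (F : lp (fun _ : X => K) 2) :
    Memℓp (fun x => U x (F (e.symm x))) 2 := by
  apply memℓp_gen
  have hs : Summable fun x : X => ‖F x‖ ^ (2 : ℝ≥0∞).toReal :=
    (lp.memℓp F).summable (by norm_num)
  have : Summable fun x : X => ‖F (e.symm x)‖ ^ (2 : ℝ≥0∞).toReal :=
    (e.symm.summable_iff (f := fun x : X => ‖F x‖ ^ (2 : ℝ≥0∞).toReal)).2 hs
  simpa [LinearIsometryEquiv.norm_map] using this

/-- The twisted translation operator on `ℓ²(X, K)`. -/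
def twistOp (e : X ≃ X) (U : X → (K ≃ₗᵢ[ℂ] K)) :
    lp (fun _ : X => K) 2 →L[ℂ] lp (fun _ : X => K) 2 :=
  LinearMap.mkContinuous
    { toFun := fun F => ⟨fun x => U x (F (e.symm x)), memTwist e U F⟩
      map_add' := by
        intro F G'
        apply lp.ext
        funext x
        simp [lp.coeFn_add, Pi.add_apply]
        rfl
      map_smul' := by
        intro c F
        apply lp.ext
        funext x
        simp [lp.coeFn_smul, Pi.smul_apply] }
    1
    (by
      intro F
      have h2 : (0:ℝ) < (2 : ℝ≥0∞).toReal := by norm_num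
      rw [one_mul]
      apply le_of_eq
      rw [lp.norm_eq_tsum_rpow h2, lp.norm_eq_tsum_rpow h2]
      congr 1
      have := (e.symm).tsum_eq (f := fun x : X => ‖F x‖ ^ (2 : ℝ≥0∞).toReal)
      simpa [LinearIsometryEquiv.norm_map] using this)

@[simp] lemma twistOp_apply (e : X ≃ X) (U : X → (K ≃ₗᵢ[ℂ] K))
    (F : lp (fun _ : X => K) 2) (x : X) :
    (twistOp e U F : ∀ _ : X, K) x = U x (F (e.symm x)) := rfl

end lp

/-- The permutation (unitary) representation of `Γ` on `ℓ²(X)` attached to an action of `Γ`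
on the set `X`, given by `(π(g)F)(x) = F(g⁻¹ • x)`. -/
def permRep (Γ X : Type*) [Group Γ] [MulAction Γ X] :
    Γ →* (lp (fun _ : X => ℂ) 2 →L[ℂ] lp (fun _ : X => ℂ) 2) where
  toFun g := twistOp (MulAction.toPerm g) (fun _ => LinearIsometryEquiv.refl ℂ ℂ)
  map_one' := by
    apply ContinuousLinearMap.ext
    intro F
    apply lp.ext
    funext x
    simp
  map_mul' := by
    intro g g'
    apply ContinuousLinearMap.ext
    intro F
    apply lp.ext
    funext x
    simp [mul_smul]

/-- The left regular representation `λ_G` of `G` on `ℓ²(G)`. -/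
def regularRep (G : Type*) [Group G] :
    G →* (lp (fun _ : G => ℂ) 2 →L[ℂ] lp (fun _ : G => ℂ) 2) :=
  permRep G G

/-- The quasi-regular representation `λ_{G/H}` of `G` on `ℓ²(G/H)`. -/
def quasiRegRep (G : Type*) [Group G] (H : Subgroup G) :
    G →* (lp (fun _ : G ⧸ H => ℂ) 2 →L[ℂ] lp (fun _ : G ⧸ H => ℂ) 2) :=
  permRep G (G ⧸ H)

/-- The embedding of `Sub(G)` into `{0,1}^G` by characteristic functions. -/
def chabautyEmbed (G : Type*) [Group G] : Subgroup G → (G → Bool) :=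
  fun H g => decide (g ∈ H)

/-- The Chabauty topology on the space of subgroups of a discrete group `G`: the topology
induced from the product topology on `{0,1}^G` via characteristic functions. -/
def chabautyTopology (G : Type*) [Group G] : TopologicalSpace (Subgroup G) :=
  TopologicalSpace.induced (chabautyEmbed G) inferInstance

/-- The conjugate subgroup `gHg⁻¹`. -/
def conjSubgroup {G : Type*} [Group G] (g : G) (H : Subgroup G) : Subgroup G :=
  Subgroup.map (MulAut.conj g).toMonoidHom H

/-- The conjugacy class of a subgroup, as a subset of `Sub(G)`. -/
def conjClass {G : Type*} [Group G] (H : Subgroup G) : Set (Subgroup G) :=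
  {K | ∃ g : G, conjSubgroup g H = K}

section Aux

open scoped Pointwise

variable {G : Type*} [Group G]

lemma lp_single_apply'' {X : Type*} [DecidableEq X] (i : X) (a : ℂ) (j : X) :
    (lp.single 2 i a : lp (fun _ : X => ℂ) 2) j = if i = j then a else 0 := by
  rw [lp.single_apply]
  by_cases h : j = i
  · subst h
    simp
  · rw [Pi.single_eq_of_ne h, if_neg fun hh => h hh.symm]

lemma permRep_apply {X : Type*} [MulAction G X] (g : G) (F : lp (fun _ : X => ℂ) 2) (x : X) :
    (permRep G X g F : ∀ _ : X, ℂ) x = F (g⁻¹ • x) := rfl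

lemma repAlg_permRep_apply {X : Type*} [MulAction G X] (f : MonoidAlgebra ℂ G)
    (F : lp (fun _ : X => ℂ) 2) (x : X) :
    (repAlg (permRep G X) f F : ∀ _ : X, ℂ) x = ∑ a ∈ f.coeff.support, f.coeff a * F (a⁻¹ • x) := by
  classical
  have h1 : repAlg (permRep G X) f = ∑ a ∈ f.coeff.support, f.coeff a • permRep G X a := by
    unfold repAlg
    rw [MonoidAlgebra.lift_apply]
    rfl
  rw [h1, ContinuousLinearMap.sum_apply, lp.coeFn_sum, Finset.sum_apply]
  refine Finset.sum_congr rfl fun a _ => ?_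
  rw [ContinuousLinearMap.smul_apply, lp.coeFn_smul, Pi.smul_apply, permRep_apply,
    smul_eq_mul]

section Congr

variable {X Y : Type*}

lemma memCongrLp (e : X ≃ Y) (F : lp (fun _ : X => ℂ) 2) :
    Memℓp (fun y => F (e.symm y)) 2 := by
  apply memℓp_gen
  have hs : Summable fun x : X => ‖F x‖ ^ (2 : ℝ≥0∞).toReal :=
    (lp.memℓp F).summable (by norm_num)
  exact ((e.symm).summable_iff (f := fun x : X => ‖F x‖ ^ (2 : ℝ≥0∞).toReal)).2 hs

/-- Transport of `ℓ²` along a bijection of index sets. -/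
def congrLp (e : X ≃ Y) : lp (fun _ : X => ℂ) 2 ≃ₗᵢ[ℂ] lp (fun _ : Y => ℂ) 2 where
  toLinearEquiv :=
    { toFun := fun F => ⟨fun y => F (e.symm y), memCongrLp e F⟩
      invFun := fun F => ⟨fun x => F (e x), by have h := memCongrLp e.symm F; simp only [Equiv.symm_symm] at h; exact h⟩
      map_add' := by
        intro F G'
        apply lp.ext
        funext y
        simp [lp.coeFn_add, Pi.add_apply]
        rfl
      map_smul' := by
        intro c F
        apply lp.ext
        funext y
        simp [lp.coeFn_smul, Pi.smul_apply]
      left_inv := by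
        intro F
        apply lp.ext
        funext x
        simp
      right_inv := by
        intro F
        apply lp.ext
        funext y
        simp }
  norm_map' := by
    intro F
    have h2 : (0:ℝ) < (2 : ℝ≥0∞).toReal := by norm_num
    rw [lp.norm_eq_tsum_rpow h2, lp.norm_eq_tsum_rpow h2]
    congr 1
    have := (e.symm).tsum_eq (f := fun x : X => ‖F x‖ ^ (2 : ℝ≥0∞).toReal)
    simpa using this

lemma congrLp_apply (e : X ≃ Y) (F : lp (fun _ : X => ℂ) 2) (y : Y) :
    (congrLp e F : ∀ _ : Y, ℂ) y = F (e.symm y) := rfl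

lemma congrLp_symm_apply (e : X ≃ Y) (F : lp (fun _ : Y => ℂ) 2) (x : X) :
    ((congrLp e).symm F : ∀ _ : X, ℂ) x = F (e x) := rfl

end Congr

lemma norm_repAlg_permRep_eq {X Y : Type*} [MulAction G X] [MulAction G Y]
    (e : X ≃ Y) (he : ∀ (a : G) (x : X), e (a • x) = a • e x) (f : MonoidAlgebra ℂ G) :
    ‖repAlg (permRep G Y) f‖ = ‖repAlg (permRep G X) f‖ := by
  have hsymm : ∀ (a : G) (y : Y), e.symm (a • y) = a • e.symm y := by
    intro a y
    apply e.injective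
    rw [he, e.apply_symm_apply, e.apply_symm_apply]
  have key : ∀ F : lp (fun _ : X => ℂ) 2,
      repAlg (permRep G Y) f (congrLp e F) = congrLp e (repAlg (permRep G X) f F) := by
    intro F
    apply lp.ext
    funext y
    rw [repAlg_permRep_apply, congrLp_apply, repAlg_permRep_apply]
    refine Finset.sum_congr rfl fun a _ => ?_
    rw [congrLp_apply, hsymm]
  apply le_antisymm
  · apply ContinuousLinearMap.opNorm_le_bound _ (norm_nonneg _)
    intro F'
    have h1 : F' = congrLp e ((congrLp e).symm F') := ((congrLp e).apply_symm_apply F').symm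
    calc ‖repAlg (permRep G Y) f F'‖
        = ‖repAlg (permRep G Y) f (congrLp e ((congrLp e).symm F'))‖ := by rw [← h1]
      _ = ‖congrLp e (repAlg (permRep G X) f ((congrLp e).symm F'))‖ := by rw [key]
      _ = ‖repAlg (permRep G X) f ((congrLp e).symm F')‖ := (congrLp e).norm_map _
      _ ≤ ‖repAlg (permRep G X) f‖ * ‖(congrLp e).symm F'‖ :=
          (repAlg (permRep G X) f).le_opNorm _
      _ = ‖repAlg (permRep G X) f‖ * ‖F'‖ := by rw [(congrLp e).symm.norm_map]
  · apply ContinuousLinearMap.opNorm_le_bound _ (norm_nonneg _)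
    intro F
    calc ‖repAlg (permRep G X) f F‖
        = ‖congrLp e (repAlg (permRep G X) f F)‖ := ((congrLp e).norm_map _).symm
      _ = ‖repAlg (permRep G Y) f (congrLp e F)‖ := by rw [key]
      _ ≤ ‖repAlg (permRep G Y) f‖ * ‖congrLp e F‖ := (repAlg (permRep G Y) f).le_opNorm _
      _ = ‖repAlg (permRep G Y) f‖ * ‖F‖ := by rw [(congrLp e).norm_map]

lemma mem_conjSubgroup (g a : G) (H : Subgroup G) :
    a ∈ conjSubgroup g H ↔ g⁻¹ * a * g ∈ H := by
  simp only [conjSubgroup, Subgroup.mem_map, MulEquiv.coe_toMonoidHom, MulAut.conj_apply]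
  constructor
  · rintro ⟨h, hh, rfl⟩
    have : g⁻¹ * (g * h * g⁻¹) * g = h := by group
    rwa [this]
  · intro h
    exact ⟨g⁻¹ * a * g, h, by group⟩

/-- The `G`-equivariant bijection `G/H ≃ G/gHg⁻¹`, `xH ↦ xg⁻¹(gHg⁻¹)`. -/
def conjQuotEquiv (g : G) (H : Subgroup G) : G ⧸ H ≃ G ⧸ conjSubgroup g H where
  toFun := Quotient.map' (· * g⁻¹) (by
    intro a b h
    rw [QuotientGroup.leftRel_apply] at h
    rw [QuotientGroup.leftRel_apply, mem_conjSubgroup]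
    have : g⁻¹ * ((a * g⁻¹)⁻¹ * (b * g⁻¹)) * g = a⁻¹ * b := by group
    rwa [this])
  invFun := Quotient.map' (· * g) (by
    intro a b h
    rw [QuotientGroup.leftRel_apply, mem_conjSubgroup] at h
    rw [QuotientGroup.leftRel_apply]
    have : (a * g)⁻¹ * (b * g) = g⁻¹ * (a⁻¹ * b) * g := by group
    rw [this]
    exact h)
  left_inv := by
    intro q
    refine Quotient.inductionOn' q fun x => ?_
    show Quotient.mk'' (x * g⁻¹ * g) = _
    congr 1
    group
  right_inv := by
    intro q
    refine Quotient.inductionOn' q fun x => ?_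
    show Quotient.mk'' (x * g * g⁻¹) = _
    congr 1
    group

lemma conjQuotEquiv_mk (g : G) (H : Subgroup G) (x : G) :
    conjQuotEquiv g H (x : G ⧸ H) = ((x * g⁻¹ : G) : G ⧸ conjSubgroup g H) := rfl

lemma conjQuotEquiv_equivariant (g : G) (H : Subgroup G) (a : G) (q : G ⧸ H) :
    conjQuotEquiv g H (a • q) = a • conjQuotEquiv g H q := by
  refine Quotient.inductionOn' q fun x => ?_
  show conjQuotEquiv g H (a • (x : G ⧸ H)) = a • conjQuotEquiv g H (x : G ⧸ H)
  rw [MulAction.Quotient.smul_mk, conjQuotEquiv_mk, conjQuotEquiv_mk,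
    MulAction.Quotient.smul_mk]
  congr 1
  simp [smul_eq_mul, mul_assoc]

end Aux

section Main

open scoped Pointwise

variable {G : Type*} [Group G]

lemma exists_conj_agree {H L : Subgroup G} (D : Finset G)
    (hL : L ∈ closure[chabautyTopology G] (conjClass H)) :
    ∃ g : G, ∀ d ∈ D, (d ∈ conjSubgroup g H ↔ d ∈ L) := by
  letI := chabautyTopology G
  have hcont : Continuous (chabautyEmbed G) := by
    rw [continuous_iff_le_induced]
    exact le_of_eq rfl
  set U : Set (Subgroup G) :=
    (chabautyEmbed G) ⁻¹' (⋂ d ∈ D, (fun φ : G → Bool => φ d) ⁻¹' {chabautyEmbed G L d}) with hU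
  have hUopen : IsOpen U := by
    apply hcont.isOpen_preimage
    apply isOpen_biInter_finset
    intro d _
    exact (continuous_apply d).isOpen_preimage _ (isOpen_discrete _)
  have hLU : L ∈ U := by
    simp [hU]
  obtain ⟨K, hKU, hKc⟩ := _root_.mem_closure_iff.1 hL U hUopen hLU
  obtain ⟨g, rfl⟩ := hKc
  refine ⟨g, fun d hd => ?_⟩
  have := hKU
  simp only [hU, Set.mem_preimage, Set.mem_iInter, Set.mem_singleton_iff] at this
  have h2 := this d hd
  simpa [chabautyEmbed, decide_eq_decide] using h2

lemma transport (f : MonoidAlgebra ℂ G) (L K : Subgroup G)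
    (s : Finset (G ⧸ L)) (F : lp (fun _ : G ⧸ L => ℂ) 2) (hFs : ∀ x ∉ s, F x = 0)
    (hK : ∀ a ∈ s.image Quotient.out ∪ f.coeff.support * s.image Quotient.out,
          ∀ b ∈ s.image Quotient.out ∪ f.coeff.support * s.image Quotient.out,
          (a⁻¹ * b ∈ K ↔ a⁻¹ * b ∈ L)) :
    ∃ F' : lp (fun _ : G ⧸ K => ℂ) 2, ‖F'‖ = ‖F‖ ∧
      ‖repAlg (permRep G (G ⧸ K)) f F'‖ = ‖repAlg (permRep G (G ⧸ L)) f F‖ := by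
  classical
  set T : Finset G := s.image Quotient.out with hT
  set W : Finset G := T ∪ f.coeff.support * T with hW
  have hTW : T ⊆ W := Finset.subset_union_left
  have h2 : (0:ℝ) < (2 : ℝ≥0∞).toReal := by norm_num
  -- cosets mod K and mod L agree on W
  have hco : ∀ a ∈ W, ∀ b ∈ W, (((a : G) : G ⧸ K) = ((b : G) : G ⧸ K) ↔
      ((a : G) : G ⧸ L) = ((b : G) : G ⧸ L)) := by
    intro a ha b hb
    rw [QuotientGroup.eq, QuotientGroup.eq]
    exact hK a ha b hb
  -- injectivity of mk on T
  have houtT : ∀ t ∈ T, Quotient.out ((t : G) : G ⧸ L) = t := by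
    intro t ht
    obtain ⟨x, _, rfl⟩ := Finset.mem_image.1 ht
    rw [QuotientGroup.out_eq']
  have hinjL : ∀ t ∈ T, ∀ t' ∈ T, ((t : G) : G ⧸ L) = ((t' : G) : G ⧸ L) → t = t' := by
    intro t ht t' ht' h
    rw [← houtT t ht, ← houtT t' ht', h]
  have hinjK : ∀ t ∈ T, ∀ t' ∈ T, ((t : G) : G ⧸ K) = ((t' : G) : G ⧸ K) → t = t' := by
    intro t ht t' ht' h
    exact hinjL t ht t' ht' ((hco t (hTW ht) t' (hTW ht')).1 h)
  have himgL : T.image (fun t : G => ((t : G) : G ⧸ L)) = s := by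
    ext x
    simp only [hT, Finset.mem_image]
    constructor
    · rintro ⟨t, ⟨x', hx', rfl⟩, rfl⟩
      rwa [QuotientGroup.out_eq']
    · intro hx
      exact ⟨Quotient.out x, ⟨x, hx, rfl⟩, QuotientGroup.out_eq' x⟩
  have hFsupp : ∀ x : G ⧸ L, F x ≠ 0 → ∃ t ∈ T, ((t : G) : G ⧸ L) = x := by
    intro x hx
    have hxs : x ∈ s := by
      by_contra hc
      exact hx (hFs x hc)
    exact ⟨Quotient.out x, Finset.mem_image_of_mem _ hxs, QuotientGroup.out_eq' x⟩
  have hFval : ∀ x : G ⧸ L,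
      F x = ∑ t ∈ T, if ((t : G) : G ⧸ L) = x then F ((t : G) : G ⧸ L) else 0 := by
    intro x
    by_cases hx : ∃ t ∈ T, ((t : G) : G ⧸ L) = x
    · obtain ⟨t, ht, rfl⟩ := hx
      rw [Finset.sum_eq_single_of_mem t ht]
      · rw [if_pos rfl]
      · intro t' ht' hne
        rw [if_neg]
        intro h
        exact hne (hinjL t' ht' t ht h)
    · rw [Finset.sum_eq_zero]
      · by_contra hne
        exact hx (hFsupp x hne)
      · intro t ht
        rw [if_neg]
        intro h
        exact hx ⟨t, ht, h⟩
  -- the transported vector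
  set F' : lp (fun _ : G ⧸ K => ℂ) 2 :=
    ∑ t ∈ T, lp.single 2 ((t : G) : G ⧸ K) (F ((t : G) : G ⧸ L)) with hF'
  have hF'val : ∀ y : G ⧸ K,
      F' y = ∑ t ∈ T, if ((t : G) : G ⧸ K) = y then F ((t : G) : G ⧸ L) else 0 := by
    intro y
    rw [hF', lp.coeFn_sum, Finset.sum_apply]
    refine Finset.sum_congr rfl fun t _ => ?_
    exact lp_single_apply'' _ _ _
  have hF'T : ∀ t ∈ T, F' ((t : G) : G ⧸ K) = F ((t : G) : G ⧸ L) := by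
    intro t ht
    rw [hF'val, Finset.sum_eq_single_of_mem t ht]
    · rw [if_pos rfl]
    · intro t' ht' hne
      rw [if_neg]
      intro h
      exact hne (hinjK t' ht' t ht h)
  have hF'supp : ∀ y : G ⧸ K, F' y ≠ 0 → ∃ t ∈ T, ((t : G) : G ⧸ K) = y := by
    intro y hy
    by_contra hc
    push_neg at hc
    apply hy
    rw [hF'val, Finset.sum_eq_zero]
    intro t ht
    rw [if_neg (hc t ht)]
  -- norm equality for F and F'
  have hnormF : ‖F'‖ = ‖F‖ := by
    rw [lp.norm_eq_tsum_rpow h2, lp.norm_eq_tsum_rpow h2]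
    congr 1
    have htsum1 : ∑' y : G ⧸ K, ‖F' y‖ ^ (2 : ℝ≥0∞).toReal =
        ∑ y ∈ T.image (fun t : G => ((t : G) : G ⧸ K)), ‖F' y‖ ^ (2 : ℝ≥0∞).toReal := by
      apply tsum_eq_sum
      intro y hy
      have : F' y = 0 := by
        by_contra hne
        obtain ⟨t, ht, hteq⟩ := hF'supp y hne
        exact hy (Finset.mem_image.2 ⟨t, ht, hteq⟩)
      rw [this, norm_zero, Real.zero_rpow h2.ne']
    have htsum2 : ∑' x : G ⧸ L, ‖F x‖ ^ (2 : ℝ≥0∞).toReal =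
        ∑ x ∈ s, ‖F x‖ ^ (2 : ℝ≥0∞).toReal := by
      apply tsum_eq_sum
      intro x hx
      rw [hFs x hx, norm_zero, Real.zero_rpow h2.ne']
    rw [htsum1, htsum2, Finset.sum_image hinjK, ← himgL, Finset.sum_image hinjL]
    refine Finset.sum_congr rfl fun t ht => ?_
    rw [hF'T t ht]
  refine ⟨F', hnormF, ?_⟩
  -- pointwise matching on W
  have hmatch : ∀ w ∈ W,
      (repAlg (permRep G (G ⧸ K)) f F' : ∀ _ : G ⧸ K, ℂ) ((w : G) : G ⧸ K) =
      (repAlg (permRep G (G ⧸ L)) f F : ∀ _ : G ⧸ L, ℂ) ((w : G) : G ⧸ L) := by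
    intro w hw
    rw [repAlg_permRep_apply, repAlg_permRep_apply]
    refine Finset.sum_congr rfl fun a ha => ?_
    congr 1
    have hsmulK : a⁻¹ • ((w : G) : G ⧸ K) = ((a⁻¹ * w : G) : G ⧸ K) := by
      rw [MulAction.Quotient.smul_mk, smul_eq_mul]
    have hsmulL : a⁻¹ • ((w : G) : G ⧸ L) = ((a⁻¹ * w : G) : G ⧸ L) := by
      rw [MulAction.Quotient.smul_mk, smul_eq_mul]
    rw [hsmulK, hsmulL, hF'val, hFval ((a⁻¹ * w : G) : G ⧸ L)]
    refine Finset.sum_congr rfl fun t ht => ?_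
    have hiff : (((t : G) : G ⧸ K) = ((a⁻¹ * w : G) : G ⧸ K)) ↔
        (((t : G) : G ⧸ L) = ((a⁻¹ * w : G) : G ⧸ L)) := by
      rw [QuotientGroup.eq, QuotientGroup.eq]
      have heq : t⁻¹ * (a⁻¹ * w) = (a * t)⁻¹ * w := by group
      rw [heq]
      exact hK (a * t) (Finset.mem_union_right _ (Finset.mul_mem_mul ha ht)) w hw
    simp only [hiff]
  -- support of the operator images
  have hAK0 : ∀ y ∉ W.image (fun w : G => ((w : G) : G ⧸ K)),
      (repAlg (permRep G (G ⧸ K)) f F' : ∀ _ : G ⧸ K, ℂ) y = 0 := by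
    intro y hy
    rw [repAlg_permRep_apply]
    apply Finset.sum_eq_zero
    intro a ha
    suffices h : F' (a⁻¹ • y) = 0 by rw [h, mul_zero]
    by_contra hne
    obtain ⟨t, ht, hteq⟩ := hF'supp _ hne
    apply hy
    refine Finset.mem_image.2 ⟨a * t, Finset.mem_union_right _ (Finset.mul_mem_mul ha ht), ?_⟩
    have : ((a * t : G) : G ⧸ K) = a • ((t : G) : G ⧸ K) := by
      rw [MulAction.Quotient.smul_mk, smul_eq_mul]
    rw [this, hteq, smul_inv_smul]
  have hAL0 : ∀ x ∉ W.image (fun w : G => ((w : G) : G ⧸ L)),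
      (repAlg (permRep G (G ⧸ L)) f F : ∀ _ : G ⧸ L, ℂ) x = 0 := by
    intro x hx
    rw [repAlg_permRep_apply]
    apply Finset.sum_eq_zero
    intro a ha
    suffices h : F (a⁻¹ • x) = 0 by rw [h, mul_zero]
    by_contra hne
    obtain ⟨t, ht, hteq⟩ := hFsupp _ hne
    apply hx
    refine Finset.mem_image.2 ⟨a * t, Finset.mem_union_right _ (Finset.mul_mem_mul ha ht), ?_⟩
    have : ((a * t : G) : G ⧸ L) = a • ((t : G) : G ⧸ L) := by
      rw [MulAction.Quotient.smul_mk, smul_eq_mul]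
    rw [this, hteq, smul_inv_smul]
  -- a common set of representatives
  set rL : G ⧸ L → G := fun x => if h : ∃ w ∈ W, ((w : G) : G ⧸ L) = x then h.choose else 1
    with hrLdef
  have hrL : ∀ x ∈ W.image (fun w : G => ((w : G) : G ⧸ L)),
      rL x ∈ W ∧ ((rL x : G) : G ⧸ L) = x := by
    intro x hx
    obtain ⟨w, hw, hwx⟩ := Finset.mem_image.1 hx
    have h : ∃ w ∈ W, ((w : G) : G ⧸ L) = x := ⟨w, hw, hwx⟩
    simp only [hrLdef, dif_pos h]
    exact ⟨h.choose_spec.1, h.choose_spec.2⟩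
  set R : Finset G := (W.image (fun w : G => ((w : G) : G ⧸ L))).image rL with hR
  have hRprop : ∀ r ∈ R, r ∈ W ∧ ((r : G) : G ⧸ L) ∈ W.image (fun w : G => ((w : G) : G ⧸ L))
      ∧ rL ((r : G) : G ⧸ L) = r := by
    intro r hr
    obtain ⟨x, hx, rfl⟩ := Finset.mem_image.1 hr
    obtain ⟨h1, h2⟩ := hrL x hx
    rw [h2]
    exact ⟨h1, hx, rfl⟩
  have hinjRL : ∀ r ∈ R, ∀ r' ∈ R, ((r : G) : G ⧸ L) = ((r' : G) : G ⧸ L) → r = r' := by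
    intro r hr r' hr' h
    rw [← (hRprop r hr).2.2, ← (hRprop r' hr').2.2, h]
  have hinjRK : ∀ r ∈ R, ∀ r' ∈ R, ((r : G) : G ⧸ K) = ((r' : G) : G ⧸ K) → r = r' := by
    intro r hr r' hr' h
    exact hinjRL r hr r' hr' ((hco r (hRprop r hr).1 r' (hRprop r' hr').1).1 h)
  have hRimgL : R.image (fun r : G => ((r : G) : G ⧸ L)) =
      W.image (fun w : G => ((w : G) : G ⧸ L)) := by
    apply Finset.Subset.antisymm
    · intro x hx
      obtain ⟨r, hr, rfl⟩ := Finset.mem_image.1 hx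
      exact (hRprop r hr).2.1
    · intro x hx
      refine Finset.mem_image.2 ⟨rL x, Finset.mem_image_of_mem _ hx, (hrL x hx).2⟩
  have hRimgK : R.image (fun r : G => ((r : G) : G ⧸ K)) =
      W.image (fun w : G => ((w : G) : G ⧸ K)) := by
    apply Finset.Subset.antisymm
    · intro y hy
      obtain ⟨r, hr, rfl⟩ := Finset.mem_image.1 hy
      exact Finset.mem_image_of_mem _ (hRprop r hr).1
    · intro y hy
      obtain ⟨w, hw, rfl⟩ := Finset.mem_image.1 hy
      have hx : ((w : G) : G ⧸ L) ∈ W.image (fun w : G => ((w : G) : G ⧸ L)) :=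
        Finset.mem_image_of_mem _ hw
      refine Finset.mem_image.2 ⟨rL ((w : G) : G ⧸ L), Finset.mem_image_of_mem _ hx, ?_⟩
      have h1 := hrL _ hx
      exact (hco _ h1.1 w hw).2 h1.2
  -- final norm computation
  rw [lp.norm_eq_tsum_rpow h2, lp.norm_eq_tsum_rpow h2]
  congr 1
  have htsumK : ∑' y : G ⧸ K,
      ‖(repAlg (permRep G (G ⧸ K)) f F' : ∀ _ : G ⧸ K, ℂ) y‖ ^ (2 : ℝ≥0∞).toReal =
      ∑ y ∈ W.image (fun w : G => ((w : G) : G ⧸ K)),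
        ‖(repAlg (permRep G (G ⧸ K)) f F' : ∀ _ : G ⧸ K, ℂ) y‖ ^ (2 : ℝ≥0∞).toReal := by
    apply tsum_eq_sum
    intro y hy
    rw [hAK0 y hy, norm_zero, Real.zero_rpow h2.ne']
  have htsumL : ∑' x : G ⧸ L,
      ‖(repAlg (permRep G (G ⧸ L)) f F : ∀ _ : G ⧸ L, ℂ) x‖ ^ (2 : ℝ≥0∞).toReal =
      ∑ x ∈ W.image (fun w : G => ((w : G) : G ⧸ L)),
        ‖(repAlg (permRep G (G ⧸ L)) f F : ∀ _ : G ⧸ L, ℂ) x‖ ^ (2 : ℝ≥0∞).toReal := by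
    apply tsum_eq_sum
    intro x hx
    rw [hAL0 x hx, norm_zero, Real.zero_rpow h2.ne']
  rw [htsumK, htsumL, ← hRimgK, ← hRimgL, Finset.sum_image hinjRK, Finset.sum_image hinjRL]
  refine Finset.sum_congr rfl fun r hr => ?_
  rw [hmatch r (hRprop r hr).1]

end Main

open scoped Pointwise

/-- If `L` lies in the Chabauty closure of the conjugacy class of `H`, then
`λ_{G/L}` is weakly contained in `λ_{G/H}`. -/
theorem quasiRegRep_weakly_contained_of_mem_closure_conjClass (G : Type*) [Group G]
    [Countable G] (H L : Subgroup G)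
    (hL : L ∈ closure[chabautyTopology G] (conjClass H)) :
    WeaklyContained (quasiRegRep G L) (quasiRegRep G H) := by
  classical
  intro f
  set C := ‖repAlg (quasiRegRep G H) f‖ with hC
  have hC0 : 0 ≤ C := norm_nonneg _
  -- Step 1: the bound on finitely supported vectors
  have hfin : ∀ (s : Finset (G ⧸ L)) (F : lp (fun _ : G ⧸ L => ℂ) 2),
      (∀ x ∉ s, F x = 0) → ‖repAlg (quasiRegRep G L) f F‖ ≤ C * ‖F‖ := by
    intro s F hFs
    set W : Finset G := s.image Quotient.out ∪ f.coeff.support * s.image Quotient.out with hWdef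
    set D : Finset G := Finset.image₂ (fun a b : G => a⁻¹ * b) W W with hDdef
    obtain ⟨g, hg⟩ := exists_conj_agree D hL
    have hKcond : ∀ a ∈ W, ∀ b ∈ W,
        (a⁻¹ * b ∈ conjSubgroup g H ↔ a⁻¹ * b ∈ L) := fun a ha b hb =>
      hg _ (Finset.mem_image₂_of_mem ha hb)
    obtain ⟨F', hF'n, hAn⟩ := transport f L (conjSubgroup g H) s F hFs hKcond
    have hnormK : ‖repAlg (permRep G (G ⧸ conjSubgroup g H)) f‖ = C := by
      rw [hC]
      exact norm_repAlg_permRep_eq (conjQuotEquiv g H) (conjQuotEquiv_equivariant g H) f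
    calc ‖repAlg (quasiRegRep G L) f F‖
        = ‖repAlg (permRep G (G ⧸ conjSubgroup g H)) f F'‖ := hAn.symm
      _ ≤ ‖repAlg (permRep G (G ⧸ conjSubgroup g H)) f‖ * ‖F'‖ :=
          (repAlg (permRep G (G ⧸ conjSubgroup g H)) f).le_opNorm _
      _ = C * ‖F‖ := by rw [hnormK, hF'n]
  -- Step 2: extend by density of finitely supported vectors
  refine ContinuousLinearMap.opNorm_le_bound _ hC0 fun F => ?_
  have hps : HasSum (fun x : G ⧸ L => lp.single 2 x (F x)) F :=
    lp.hasSum_single (by norm_num) F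
  have h1 : Tendsto
      (fun t : Finset (G ⧸ L) =>
        ‖repAlg (quasiRegRep G L) f (∑ x ∈ t, lp.single 2 x (F x))‖)
      atTop (𝓝 ‖repAlg (quasiRegRep G L) f F‖) :=
    (((repAlg (quasiRegRep G L) f).continuous.tendsto F).comp hps).norm
  have h2 : Tendsto
      (fun t : Finset (G ⧸ L) => C * ‖(∑ x ∈ t, lp.single 2 x (F x))‖)
      atTop (𝓝 (C * ‖F‖)) := hps.norm.const_mul C
  refine le_of_tendsto_of_tendsto' h1 h2 fun t => ?_
  apply hfin t
  intro x hx
  rw [lp.coeFn_sum, Finset.sum_apply]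
  apply Finset.sum_eq_zero
  intro i hi
  rw [lp_single_apply'', if_neg]
  intro h
  rw [h] at hi
  exact hx hi


end QR
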